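/- arXiv:2302.04441 — 3 statements merged into one kernel-verified Lean document; each statement's English description precedes it below -/
import Mathlib

section
/- For any vectors x_1, ..., x_n in R^k and any γ > 0, letting S_γ = γ I + sum_{i=1}^n x_i x_i^T, the sum over j of sqrt(x_j^T S_γ^{-1} x_j) is at most sqrt(n*k). -/
open Matrix

theorem stmt1 (n k : ℕ) (x : Fin n → Fin k → ℝ) (γ : ℝ) (hγ : 0 < γ)
    (S : Matrix (Fin k) (Fin k) ℝ)
    (hS : S = γ • (1 : Matrix (Fin k) (Fin k) ℝ) + ∑ i, vecMulVec (x i) (x i)) :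
    ∑ j, Real.sqrt (x j ⬝ᵥ S⁻¹.mulVec (x j)) ≤ Real.sqrt (n * k) := by
  classical
  have hsum : ∀ (v : Fin k → ℝ), (∑ i, vecMulVec (x i) (x i)) *ᵥ v
      = ∑ i, (vecMulVec (x i) (x i)) *ᵥ v := by
    intro v; ext l
    simp only [mulVec, dotProduct, Matrix.sum_apply, Finset.sum_apply, Finset.sum_mul]
    rw [Finset.sum_comm]
  have hquad : ∀ (a v : Fin k → ℝ), v ⬝ᵥ (vecMulVec a a) *ᵥ v = (a ⬝ᵥ v) ^ 2 := by
    intro a v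
    simp only [mulVec, dotProduct, vecMulVec_apply, sq, Finset.mul_sum, Finset.sum_mul]
    rw [Finset.sum_comm]
    congr 1; ext i; congr 1; ext j; ring
  have hherm : S.IsHermitian := by
    rw [hS]
    refine Matrix.IsHermitian.add ?_ ?_
    · simp [Matrix.IsHermitian]
    · show _ = _
      rw [Matrix.conjTranspose_sum]
      refine Finset.sum_congr rfl fun i _ => ?_
      ext a b
      simp [vecMulVec_apply, mul_comm]
  have hpd : S.PosDef := by
    refine Matrix.posDef_iff_dotProduct_mulVec.mpr ⟨hherm, fun v hv => ?_⟩
    have hstar : star v = v := by simp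
    rw [hstar, hS, Matrix.add_mulVec, dotProduct_add]
    have h1 : v ⬝ᵥ (γ • (1 : Matrix (Fin k) (Fin k) ℝ)) *ᵥ v = γ * (v ⬝ᵥ v) := by
      rw [Matrix.smul_mulVec, dotProduct_smul, Matrix.one_mulVec]; rfl
    have h2 : v ⬝ᵥ (∑ i, vecMulVec (x i) (x i)) *ᵥ v = ∑ i, (x i ⬝ᵥ v) ^ 2 := by
      rw [hsum]
      have hds : v ⬝ᵥ (∑ i, (vecMulVec (x i) (x i)) *ᵥ v)
          = ∑ i, v ⬝ᵥ ((vecMulVec (x i) (x i)) *ᵥ v) := by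
        simp only [dotProduct, Finset.sum_apply, Finset.mul_sum]
        rw [Finset.sum_comm]
      rw [hds]
      exact Finset.sum_congr rfl fun i _ => hquad _ _
    rw [h1, h2]
    have hvv : 0 < v ⬝ᵥ v := by
      have := dotProduct_self_star_pos_iff.mpr hv
      simpa using this
    have hs2 : 0 ≤ ∑ i, (x i ⬝ᵥ v) ^ 2 := Finset.sum_nonneg fun i _ => sq_nonneg _
    nlinarith
  have hinv : S⁻¹.PosDef := hpd.inv
  set a : Fin n → ℝ := fun j => x j ⬝ᵥ S⁻¹ *ᵥ x j with ha
  have hanonneg : ∀ j, 0 ≤ a j := by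
    intro j
    have := hinv.posSemidef.dotProduct_mulVec_nonneg (x j)
    simpa using this
  -- trace identity
  have htr : ∀ (b : Fin k → ℝ) (M : Matrix (Fin k) (Fin k) ℝ),
      b ⬝ᵥ M *ᵥ b = trace (vecMulVec b b * M) := by
    intro b M
    simp only [trace, diag, mul_apply, vecMulVec_apply, mulVec, dotProduct, Finset.mul_sum]
    rw [Finset.sum_comm]
    congr 1; ext i; congr 1; ext j; ring
  have hkey : ∑ j, a j ≤ (k : ℝ) := by
    have e1 : ∑ j, a j = trace ((∑ j, vecMulVec (x j) (x j)) * S⁻¹) := by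
      rw [Finset.sum_mul, trace_sum]
      exact Finset.sum_congr rfl fun j _ => htr _ _
    have e2 : (∑ j, vecMulVec (x j) (x j)) = S - γ • (1 : Matrix (Fin k) (Fin k) ℝ) := by
      rw [hS]; abel
    have hdet : IsUnit S.det := hpd.det_pos.ne'.isUnit
    have e3 : S * S⁻¹ = 1 := Matrix.mul_nonsing_inv S hdet
    have e4 : trace ((S - γ • (1 : Matrix (Fin k) (Fin k) ℝ)) * S⁻¹)
        = (k : ℝ) - γ * trace S⁻¹ := by
      rw [Matrix.sub_mul, trace_sub, e3, trace_one, Matrix.smul_mul, Matrix.one_mul,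
        trace_smul]
      simp [smul_eq_mul]
    have htrinv : 0 ≤ trace S⁻¹ := by
      rw [trace]
      refine Finset.sum_nonneg fun i _ => ?_
      have := hinv.posSemidef.dotProduct_mulVec_nonneg (Pi.single i 1)
      simpa [mulVec, dotProduct, Pi.single_apply, diag] using this
    rw [e1, e2, e4]
    nlinarith
  -- Cauchy-Schwarz
  have hcs : (∑ j, Real.sqrt (a j)) ^ 2 ≤ (n : ℝ) * ∑ j, Real.sqrt (a j) ^ 2 := by
    simpa using sq_sum_le_card_mul_sum_sq (s := Finset.univ) (f := fun j => Real.sqrt (a j))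
  have hsq : ∑ j, Real.sqrt (a j) ^ 2 = ∑ j, a j :=
    Finset.sum_congr rfl fun j _ => Real.sq_sqrt (hanonneg j)
  have hnn : 0 ≤ ∑ j, Real.sqrt (a j) :=
    Finset.sum_nonneg fun j _ => Real.sqrt_nonneg _
  have : (∑ j, Real.sqrt (a j)) ^ 2 ≤ (n : ℝ) * k := by
    rw [hsq] at hcs
    refine hcs.trans ?_
    have : (0:ℝ) ≤ (n:ℝ) := Nat.cast_nonneg n
    nlinarith [hkey]
  calc ∑ j, Real.sqrt (a j) = Real.sqrt ((∑ j, Real.sqrt (a j)) ^ 2) := by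
        rw [Real.sqrt_sq hnn]
    _ ≤ Real.sqrt ((n : ℝ) * k) := Real.sqrt_le_sqrt this
end

section
/- Let γ ≥ 1, k ≥ 1, and let φ_1, ..., φ_t be vectors in R^k each with norm at most 1. Then log( det(γ I_k + sum_{τ=1}^t φ_τ φ_τ^T) / det(γ I_k) ) ≤ k * log(1 + t/(γ k)). -/
open Matrix

theorem stmt2 (k t : ℕ) (hk : 1 ≤ k) (γ : ℝ) (hγ : 1 ≤ γ)
    (φ : Fin t → Fin k → ℝ) (hφ : ∀ τ, ∑ i, φ τ i ^ 2 ≤ 1) :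
    Real.log ((γ • (1 : Matrix (Fin k) (Fin k) ℝ) + ∑ τ, vecMulVec (φ τ) (φ τ)).det
        / (γ • (1 : Matrix (Fin k) (Fin k) ℝ)).det)
      ≤ k * Real.log (1 + t / (γ * k)) := by
  have hγ0 : (0:ℝ) < γ := lt_of_lt_of_le one_pos hγ
  have hk0 : (0:ℝ) < (k:ℝ) := by exact_mod_cast hk
  set M : Matrix (Fin k) (Fin k) ℝ :=
    γ • (1 : Matrix (Fin k) (Fin k) ℝ) + ∑ τ, vecMulVec (φ τ) (φ τ) with hMdef
  -- positive definiteness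
  have hsmul : (γ • (1 : Matrix (Fin k) (Fin k) ℝ)).PosDef := by
    rw [smul_one_eq_diagonal]
    exact (Matrix.posDef_diagonal_iff).2 fun _ => hγ0
  have hpsd : (∑ τ, vecMulVec (φ τ) (φ τ)).PosSemidef := by
    refine Finset.sum_induction _ _ (fun A B hA hB => hA.add hB) Matrix.PosSemidef.zero
      fun τ _ => ?_
    have h : vecMulVec (φ τ) (φ τ) = (Matrix.replicateRow Unit (φ τ))ᴴ * Matrix.replicateRow Unit (φ τ) := by
      rw [Matrix.vecMulVec_eq Unit, Matrix.conjTranspose_replicateRow]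
      simp
    rw [h]
    exact Matrix.posSemidef_conjTranspose_mul_self _
  have hpd : M.PosDef := hsmul.add_posSemidef hpsd
  set lam := hpd.isHermitian.eigenvalues with hlam
  have hpos : ∀ i, 0 < lam i := fun i => hpd.eigenvalues_pos i
  -- determinant and trace via eigenvalues
  have hdet : M.det = ∏ i, lam i := by
    have := hpd.isHermitian.det_eq_prod_eigenvalues
    simpa using this
  have htr : M.trace = ∑ i, lam i := by
    have := hpd.isHermitian.trace_eq_sum_eigenvalues
    simpa using this
  -- trace bound
  have htrace_le : M.trace ≤ γ * k + t := by
    have h1 : M.trace = γ * k + ∑ τ, ∑ i, φ τ i ^ 2 := by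
      rw [hMdef, Matrix.trace_add, Matrix.trace_smul, Matrix.trace_one, Matrix.trace_sum]
      simp only [smul_eq_mul, Fintype.card_fin]
      congr 1
      refine Finset.sum_congr rfl fun τ _ => ?_
      simp [Matrix.trace, Matrix.diag, Matrix.vecMulVec_apply, sq]
    rw [h1]
    have h2 : ∑ τ : Fin t, ∑ i, φ τ i ^ 2 ≤ ∑ τ : Fin t, (1:ℝ) :=
      Finset.sum_le_sum fun τ _ => hφ τ
    simp only [Finset.sum_const, Finset.card_univ, Fintype.card_fin, smul_eq_mul,
      nsmul_eq_mul, mul_one] at h2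
    linarith
  -- AM-GM : ∏ lam ≤ (∑ lam / k) ^ k
  have hsum_pos : 0 < ∑ i, lam i := Finset.sum_pos (fun i _ => hpos i) ⟨⟨0, hk⟩, Finset.mem_univ _⟩
  have hamgm : ∏ i, lam i ≤ ((∑ i, lam i) / k) ^ k := by
    have h := Real.geom_mean_le_arith_mean_weighted Finset.univ (fun _ => (k:ℝ)⁻¹) lam
      (fun i _ => by positivity)
      (by simp [Finset.sum_const, Finset.card_univ, Fintype.card_fin, nsmul_eq_mul]; field_simp)
      (fun i _ => (hpos i).le)
    have h2 : (∏ i, lam i ^ ((k:ℝ)⁻¹)) ^ k ≤ (∑ i, (k:ℝ)⁻¹ * lam i) ^ k :=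
      pow_le_pow_left₀ (Finset.prod_nonneg fun i _ => Real.rpow_nonneg (hpos i).le _) h k
    calc ∏ i, lam i = (∏ i, lam i ^ ((k:ℝ)⁻¹)) ^ k := by
          rw [← Finset.prod_pow]
          refine Finset.prod_congr rfl fun i _ => ?_
          rw [← Real.rpow_natCast (lam i ^ ((k:ℝ)⁻¹)) k, ← Real.rpow_mul (hpos i).le,
            inv_mul_cancel₀ hk0.ne', Real.rpow_one]
      _ ≤ (∑ i, (k:ℝ)⁻¹ * lam i) ^ k := h2
      _ = ((∑ i, lam i) / k) ^ k := by
          rw [← Finset.mul_sum]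
          congr 1
          rw [inv_mul_eq_div]
  -- put things together
  have hdetγ : (γ • (1 : Matrix (Fin k) (Fin k) ℝ)).det = γ ^ k := by
    simp [Matrix.det_smul, Fintype.card_fin]
  have hγk0 : (0:ℝ) < γ ^ k := pow_pos hγ0 k
  have hratio : M.det / γ ^ k ≤ (1 + t / (γ * k)) ^ k := by
    have hstep : M.det ≤ ((γ * k + t) / k) ^ k := by
      calc M.det = ∏ i, lam i := hdet
        _ ≤ ((∑ i, lam i) / k) ^ k := hamgm
        _ ≤ ((γ * k + t) / k) ^ k := by
            have hsle : (∑ i, lam i) ≤ γ * k + t := htr ▸ htrace_le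
            gcongr
    have heq : (1 + (t:ℝ) / (γ * k)) ^ k * γ ^ k = ((γ * k + t) / k) ^ k := by
      rw [← mul_pow]
      congr 1
      field_simp
    rw [div_le_iff₀ hγk0, heq]
    exact hstep
  have hMdetpos : 0 < M.det := hpd.det_pos
  calc Real.log (M.det / (γ • (1 : Matrix (Fin k) (Fin k) ℝ)).det)
      = Real.log (M.det / γ ^ k) := by rw [hdetγ]
    _ ≤ Real.log ((1 + t / (γ * k)) ^ k) := by
        apply Real.log_le_log (by positivity) hratio
    _ = k * Real.log (1 + t / (γ * k)) := by rw [Real.log_pow]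
end

section
/- Let A_m be a d×d positive semi-definite matrix with ||A_m|| ≤ L², let B, B̂ in R^{d×k} have orthonormal columns, let B_⊥ be an orthonormal complement of B (so B B^T + B_⊥ B_⊥^T = I_d), and suppose σ_min(B^T A_m B) ≥ ω > 0. If ||B̂^T B_⊥|| ≤ ω/(6L²) and ω ≤ L², then σ_min(B̂^T A_m B̂) ≥ (1 − ω²/(36L⁴))·ω − ω/2 > 0; in particular B̂^T A_m B̂ is invertible. -/
open Matrix

/-- Spectral (ℓ2 operator) norm of a real matrix. -/
noncomputable def specNorm {m n : ℕ} (A : Matrix (Fin m) (Fin n) ℝ) : ℝ :=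
  ⨆ x : {x : Fin n → ℝ // ∑ i, x i ^ 2 = 1},
    Real.sqrt (∑ i, (A.mulVec (x : Fin n → ℝ) i) ^ 2)

/-- Minimum eigenvalue (Rayleigh quotient minimum) of a square real matrix. -/
noncomputable def minEig {d : ℕ} (A : Matrix (Fin d) (Fin d) ℝ) : ℝ :=
  ⨅ x : {x : Fin d → ℝ // ∑ i, x i ^ 2 = 1},
    (x : Fin d → ℝ) ⬝ᵥ A.mulVec (x : Fin d → ℝ)

/-- Frobenius-type bound. -/
lemma frob_bound {m n : ℕ} (M : Matrix (Fin m) (Fin n) ℝ) (x : Fin n → ℝ) :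
    ∑ i, (M.mulVec x i) ^ 2 ≤ (∑ i, ∑ j, M i j ^ 2) * ∑ j, x j ^ 2 := by
  have h : ∀ i : Fin m, (M.mulVec x i) ^ 2 ≤ (∑ j, M i j ^ 2) * ∑ j, x j ^ 2 := by
    intro i
    have := Finset.sum_mul_sq_le_sq_mul_sq Finset.univ (fun j => M i j) x
    simpa [Matrix.mulVec, dotProduct] using this
  calc ∑ i, (M.mulVec x i) ^ 2 ≤ ∑ i, (∑ j, M i j ^ 2) * ∑ j, x j ^ 2 :=
        Finset.sum_le_sum fun i _ => h i
    _ = (∑ i, ∑ j, M i j ^ 2) * ∑ j, x j ^ 2 := by rw [Finset.sum_mul]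

lemma specNorm_nonneg {m n : ℕ} (M : Matrix (Fin m) (Fin n) ℝ) : 0 ≤ specNorm M :=
  Real.iSup_nonneg fun _ => Real.sqrt_nonneg _

lemma specNorm_unit {m n : ℕ} (M : Matrix (Fin m) (Fin n) ℝ) (x : Fin n → ℝ)
    (hx : ∑ i, x i ^ 2 = 1) : ∑ i, (M.mulVec x i) ^ 2 ≤ (specNorm M) ^ 2 := by
  have hb : BddAbove (Set.range fun y : {x : Fin n → ℝ // ∑ i, x i ^ 2 = 1} =>
      Real.sqrt (∑ i, (M.mulVec (y : Fin n → ℝ) i) ^ 2)) := by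
    refine ⟨Real.sqrt (∑ i, ∑ j, M i j ^ 2), ?_⟩
    rintro r ⟨⟨y, hy⟩, rfl⟩
    apply Real.sqrt_le_sqrt
    have := frob_bound M y
    rw [hy, mul_one] at this
    exact this
  have h1 : Real.sqrt (∑ i, (M.mulVec x i) ^ 2) ≤ specNorm M :=
    le_ciSup hb ⟨x, hx⟩
  have h2 : ∑ i, (M.mulVec x i) ^ 2 =
      (Real.sqrt (∑ i, (M.mulVec x i) ^ 2)) ^ 2 :=
    (Real.sq_sqrt (Finset.sum_nonneg fun i _ => sq_nonneg _)).symm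
  rw [h2]
  exact pow_le_pow_left₀ (Real.sqrt_nonneg _) h1 2

lemma sum_sq_smul {n : ℕ} (c : ℝ) (u : Fin n → ℝ) :
    ∑ i, (c • u) i ^ 2 = c ^ 2 * ∑ i, u i ^ 2 := by
  simp [smul_eq_mul, mul_pow, Finset.mul_sum]

/-- ‖Mu‖² ≤ ‖M‖² ‖u‖². -/
lemma specNorm_mulVec {m n : ℕ} (M : Matrix (Fin m) (Fin n) ℝ) (u : Fin n → ℝ) :
    ∑ i, (M.mulVec u i) ^ 2 ≤ (specNorm M) ^ 2 * ∑ i, u i ^ 2 := by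
  rcases eq_or_lt_of_le (Finset.sum_nonneg fun i (_ : i ∈ Finset.univ) =>
      sq_nonneg (u i)) with hs | hs
  · have hu : u = 0 := by
      funext i
      have := (Finset.sum_eq_zero_iff_of_nonneg
        (fun j (_ : j ∈ Finset.univ) => sq_nonneg (u j))).mp hs.symm i (Finset.mem_univ i)
      exact pow_eq_zero_iff (n := 2) (by norm_num) |>.mp this
    simp [hu, Matrix.mulVec_zero]
  · set s : ℝ := ∑ i, u i ^ 2 with hsdef
    have hc : Real.sqrt s > 0 := Real.sqrt_pos.mpr hs
    have hcs : (Real.sqrt s) ^ 2 = s := Real.sq_sqrt hs.le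
    have hx : ∑ i, (((Real.sqrt s)⁻¹ • u) i) ^ 2 = 1 := by
      rw [sum_sq_smul, ← hsdef, inv_pow, hcs]
      field_simp
    have h := specNorm_unit M _ hx
    rw [M.mulVec_smul, sum_sq_smul, inv_pow, hcs] at h
    have h' := mul_le_mul_of_nonneg_left h hs.le
    rw [← mul_assoc, mul_inv_cancel₀ hs.ne', one_mul] at h'
    linarith [h']

lemma dot_self_eq {n : ℕ} (u : Fin n → ℝ) : u ⬝ᵥ u = ∑ i, u i ^ 2 := by
  simp [dotProduct, sq]

/-- Cauchy–Schwarz. -/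
lemma dot_le {n : ℕ} (u w : Fin n → ℝ) :
    u ⬝ᵥ w ≤ Real.sqrt (∑ i, u i ^ 2) * Real.sqrt (∑ i, w i ^ 2) := by
  have h := Finset.sum_mul_sq_le_sq_mul_sq Finset.univ u w
  have h1 : u ⬝ᵥ w ≤ |u ⬝ᵥ w| := le_abs_self _
  have h2 : |u ⬝ᵥ w| = Real.sqrt ((u ⬝ᵥ w) ^ 2) := (Real.sqrt_sq_eq_abs _).symm
  rw [h2] at h1
  refine h1.trans ?_
  rw [← Real.sqrt_mul (Finset.sum_nonneg fun i _ => sq_nonneg _)]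
  exact Real.sqrt_le_sqrt (by simpa [dotProduct] using h)

/-- Quadratic form upper bound by spectral norm. -/
lemma quad_le {n : ℕ} (M : Matrix (Fin n) (Fin n) ℝ) (u : Fin n → ℝ) :
    u ⬝ᵥ M.mulVec u ≤ specNorm M * ∑ i, u i ^ 2 := by
  have h1 := dot_le u (M.mulVec u)
  have h2 : Real.sqrt (∑ i, (M.mulVec u i) ^ 2) ≤
      Real.sqrt ((specNorm M) ^ 2 * ∑ i, u i ^ 2) :=
    Real.sqrt_le_sqrt (specNorm_mulVec M u)
  have h3 : Real.sqrt ((specNorm M) ^ 2 * ∑ i, u i ^ 2) =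
      specNorm M * Real.sqrt (∑ i, u i ^ 2) := by
    rw [Real.sqrt_mul (sq_nonneg _), Real.sqrt_sq (specNorm_nonneg M)]
  have h4 : u ⬝ᵥ M.mulVec u ≤
      Real.sqrt (∑ i, u i ^ 2) * (specNorm M * Real.sqrt (∑ i, u i ^ 2)) :=
    h1.trans (by
      apply mul_le_mul_of_nonneg_left _ (Real.sqrt_nonneg _)
      rw [← h3]; exact h2)
  calc u ⬝ᵥ M.mulVec u ≤
      Real.sqrt (∑ i, u i ^ 2) * (specNorm M * Real.sqrt (∑ i, u i ^ 2)) := h4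
    _ = specNorm M * (Real.sqrt (∑ i, u i ^ 2) * Real.sqrt (∑ i, u i ^ 2)) := by ring
    _ = specNorm M * ∑ i, u i ^ 2 := by
        rw [Real.mul_self_sqrt (Finset.sum_nonneg fun i _ => sq_nonneg _)]

lemma transpose_dot' : True := trivial

lemma dot_transpose {m n : ℕ} (M : Matrix (Fin m) (Fin n) ℝ) (x : Fin n → ℝ)
    (z : Fin m → ℝ) : x ⬝ᵥ Mᵀ.mulVec z = M.mulVec x ⬝ᵥ z := by
  rw [dotProduct_mulVec, Matrix.vecMul_transpose, dotProduct_comm]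

lemma transpose_dot {m n : ℕ} (M : Matrix (Fin m) (Fin n) ℝ) (x : Fin n → ℝ)
    (z : Fin m → ℝ) : Mᵀ.mulVec z ⬝ᵥ x = z ⬝ᵥ M.mulVec x := by
  rw [dotProduct_comm, dot_transpose, dotProduct_comm]

/-- ‖Mᵀy‖² ≤ ‖M‖²‖y‖². -/
lemma specNorm_transpose_mulVec {m n : ℕ} (M : Matrix (Fin m) (Fin n) ℝ)
    (y : Fin m → ℝ) :
    ∑ i, (Mᵀ.mulVec y i) ^ 2 ≤ (specNorm M) ^ 2 * ∑ i, y i ^ 2 := by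
  set t : ℝ := ∑ i, (Mᵀ.mulVec y i) ^ 2 with ht
  have ht0 : 0 ≤ t := Finset.sum_nonneg fun i _ => sq_nonneg _
  have heq : t = y ⬝ᵥ M.mulVec (Mᵀ.mulVec y) := by
    rw [ht, ← dot_self_eq, dot_transpose M (Mᵀ.mulVec y) y, dotProduct_comm]
  have h1 : t ≤ Real.sqrt (∑ i, y i ^ 2) *
      Real.sqrt (∑ i, (M.mulVec (Mᵀ.mulVec y) i) ^ 2) := by
    rw [heq]; exact dot_le _ _
  have h2 : Real.sqrt (∑ i, (M.mulVec (Mᵀ.mulVec y) i) ^ 2) ≤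
      specNorm M * Real.sqrt t := by
    have := Real.sqrt_le_sqrt (specNorm_mulVec M (Mᵀ.mulVec y))
    rwa [Real.sqrt_mul (sq_nonneg _), Real.sqrt_sq (specNorm_nonneg M), ← ht] at this
  have h3 : t ≤ Real.sqrt (∑ i, y i ^ 2) * (specNorm M * Real.sqrt t) :=
    h1.trans (mul_le_mul_of_nonneg_left h2 (Real.sqrt_nonneg _))
  rcases eq_or_lt_of_le ht0 with h0 | h0
  · rw [← h0]
    positivity
  · have hst : Real.sqrt t > 0 := Real.sqrt_pos.mpr h0
    have h4 : Real.sqrt t * Real.sqrt t ≤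
        Real.sqrt (∑ i, y i ^ 2) * specNorm M * Real.sqrt t := by
      rw [Real.mul_self_sqrt ht0]
      linarith [h3]
    have h5 : Real.sqrt t ≤ Real.sqrt (∑ i, y i ^ 2) * specNorm M :=
      le_of_mul_le_mul_right (by linarith [h4]) hst
    have h6 : t ≤ (Real.sqrt (∑ i, y i ^ 2) * specNorm M) ^ 2 := by
      rw [← Real.sq_sqrt ht0]
      exact pow_le_pow_left₀ (Real.sqrt_nonneg _) h5 2
    calc t ≤ (Real.sqrt (∑ i, y i ^ 2) * specNorm M) ^ 2 := h6
      _ = (specNorm M) ^ 2 * (Real.sqrt (∑ i, y i ^ 2)) ^ 2 := by ring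
      _ = (specNorm M) ^ 2 * ∑ i, y i ^ 2 := by
          rw [Real.sq_sqrt (Finset.sum_nonneg fun i _ => sq_nonneg _)]

lemma minEig_le {n : ℕ} (M : Matrix (Fin n) (Fin n) ℝ) (u : Fin n → ℝ)
    (hu : ∑ i, u i ^ 2 = 1) : minEig M ≤ u ⬝ᵥ M.mulVec u := by
  have hb : BddBelow (Set.range fun x : {x : Fin n → ℝ // ∑ i, x i ^ 2 = 1} =>
      (x : Fin n → ℝ) ⬝ᵥ M.mulVec (x : Fin n → ℝ)) := by
    refine ⟨-Real.sqrt (∑ i, ∑ j, M i j ^ 2), ?_⟩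
    rintro r ⟨⟨y, hy⟩, rfl⟩
    have h1 : (-y) ⬝ᵥ M.mulVec y ≤
        Real.sqrt (∑ i, (-y) i ^ 2) * Real.sqrt (∑ i, (M.mulVec y i) ^ 2) :=
      dot_le _ _
    have hny : ∑ i, (-y) i ^ 2 = 1 := by simpa using hy
    rw [hny, Real.sqrt_one, one_mul] at h1
    have h2 : Real.sqrt (∑ i, (M.mulVec y i) ^ 2) ≤
        Real.sqrt (∑ i, ∑ j, M i j ^ 2) := by
      apply Real.sqrt_le_sqrt
      have := frob_bound M y
      rwa [hy, mul_one] at this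
    have h3 : (-y) ⬝ᵥ M.mulVec y = -(y ⬝ᵥ M.mulVec y) := by
      simp [dotProduct, Finset.sum_neg_distrib]
    simp only [h3] at h1
    linarith [h1.trans h2]
  exact ciInf_le hb ⟨u, hu⟩

lemma minEig_mul_le {n : ℕ} (M : Matrix (Fin n) (Fin n) ℝ) (p : Fin n → ℝ) :
    minEig M * ∑ i, p i ^ 2 ≤ p ⬝ᵥ M.mulVec p := by
  rcases eq_or_lt_of_le (Finset.sum_nonneg fun i (_ : i ∈ Finset.univ) =>
      sq_nonneg (p i)) with hs | hs
  · have hp : p = 0 := by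
      funext i
      have := (Finset.sum_eq_zero_iff_of_nonneg
        (fun j (_ : j ∈ Finset.univ) => sq_nonneg (p j))).mp hs.symm i (Finset.mem_univ i)
      exact pow_eq_zero_iff (n := 2) (by norm_num) |>.mp this
    simp [hp, ← hs]
  · set s : ℝ := ∑ i, p i ^ 2 with hsdef
    have hcs : (Real.sqrt s) ^ 2 = s := Real.sq_sqrt hs.le
    have hx : ∑ i, (((Real.sqrt s)⁻¹ • p) i) ^ 2 = 1 := by
      rw [sum_sq_smul, ← hsdef, inv_pow, hcs]
      field_simp
    have h := minEig_le M _ hx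
    have hquad : ((Real.sqrt s)⁻¹ • p) ⬝ᵥ M.mulVec ((Real.sqrt s)⁻¹ • p)
        = ((Real.sqrt s)⁻¹) ^ 2 * (p ⬝ᵥ M.mulVec p) := by
      rw [M.mulVec_smul]
      simp [dotProduct, smul_eq_mul, Finset.mul_sum]
      ring_nf
    rw [hquad, inv_pow, hcs] at h
    have hsne : s ≠ 0 := hs.ne'
    have h' := mul_le_mul_of_nonneg_right h hs.le
    have hfin : s⁻¹ * (p ⬝ᵥ M.mulVec p) * s = p ⬝ᵥ M.mulVec p := by
      field_simp
    rw [hfin] at h'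
    exact h'

lemma minEig_ge {n : ℕ} (hn : 0 < n) (M : Matrix (Fin n) (Fin n) ℝ) (c : ℝ)
    (h : ∀ x : Fin n → ℝ, ∑ i, x i ^ 2 = 1 → c ≤ x ⬝ᵥ M.mulVec x) :
    c ≤ minEig M := by
  haveI : Nonempty {x : Fin n → ℝ // ∑ i, x i ^ 2 = 1} := by
    refine ⟨⟨Pi.single ⟨0, hn⟩ 1, ?_⟩⟩
    simp [Pi.single_apply]
  exact le_ciInf fun ⟨x, hx⟩ => h x hx

set_option maxHeartbeats 1000000 in
theorem stmt10 (d k : ℕ) (A : Matrix (Fin d) (Fin d) ℝ) (hA : A.PosSemidef)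
    (L om : ℝ) (hom : 0 < om) (homL : om ≤ L ^ 2) (hAnorm : specNorm A ≤ L ^ 2)
    (B Bhat : Matrix (Fin d) (Fin k) ℝ) (Bperp : Matrix (Fin d) (Fin (d - k)) ℝ)
    (hB : Bᵀ * B = 1) (hBhat : Bhatᵀ * Bhat = 1) (hBperp : Bperpᵀ * Bperp = 1)
    (hcomp : B * Bᵀ + Bperp * Bperpᵀ = 1)
    (hmin : om ≤ minEig (Bᵀ * A * B))
    (hclose : specNorm (Bhatᵀ * Bperp) ≤ om / (6 * L ^ 2)) :
    (1 - om ^ 2 / (36 * L ^ 4)) * om - om / 2 ≤ minEig (Bhatᵀ * A * Bhat) ∧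
    0 < (1 - om ^ 2 / (36 * L ^ 4)) * om - om / 2 ∧
    IsUnit (Bhatᵀ * A * Bhat) := by
  have hL2 : (0:ℝ) < L ^ 2 := lt_of_lt_of_le hom homL
  have hL : L ≠ 0 := fun h => by rw [h] at hL2; simp at hL2
  have hL4 : (0:ℝ) < L ^ 4 := by positivity
  -- k must be positive
  rcases Nat.eq_zero_or_pos k with hk0 | hk
  · exfalso
    subst hk0
    haveI : IsEmpty {x : Fin 0 → ℝ // ∑ i, x i ^ 2 = 1} := by
      refine ⟨fun ⟨x, hx⟩ => ?_⟩
      simp at hx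
    have : minEig (Bᵀ * A * B) = 0 := by
      unfold minEig
      exact Real.iInf_of_isEmpty _
    rw [this] at hmin
    linarith
  set ε : ℝ := om / (6 * L ^ 2) with hεdef
  have hε0 : 0 ≤ ε := by positivity
  have hε2 : ε ^ 2 = om ^ 2 / (36 * L ^ 4) := by
    rw [hεdef]
    field_simp
    ring
  have h2Lε : 2 * L ^ 2 * ε = om / 3 := by
    rw [hεdef]
    field_simp
    ring
  -- positivity of the target
  have hom2 : om ^ 2 ≤ L ^ 4 := by nlinarith
  have hr : om ^ 2 / (36 * L ^ 4) ≤ 1 / 36 := by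
    rw [div_le_div_iff₀ (by positivity) (by norm_num : (0:ℝ) < 36)]
    nlinarith
  have htargetpos : 0 < (1 - om ^ 2 / (36 * L ^ 4)) * om - om / 2 := by nlinarith
  -- decomposition A = Cᵀ C
  obtain ⟨C, hC⟩ : ∃ C : Matrix (Fin d) (Fin d) ℝ, A = Cᴴ * C := by
    open scoped MatrixOrder in exact CStarAlgebra.nonneg_iff_eq_star_mul_self.mp hA.nonneg
  have hC' : A = Cᵀ * C := by rwa [Matrix.conjTranspose_eq_transpose_of_trivial] at hC
  have hquadA : ∀ v : Fin d → ℝ, v ⬝ᵥ A.mulVec v = ∑ i, (C.mulVec v i) ^ 2 := by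
    intro v
    rw [hC', ← Matrix.mulVec_mulVec, dot_transpose, dot_self_eq]
  -- the key lower bound for every unit vector
  have key : ∀ x : Fin k → ℝ, ∑ i, x i ^ 2 = 1 →
      (1 - om ^ 2 / (36 * L ^ 4)) * om - om / 2 ≤
        x ⬝ᵥ (Bhatᵀ * A * Bhat).mulVec x := by
    intro x hx
    obtain ⟨v, hvdef⟩ : ∃ v', v' = Bhat.mulVec x := ⟨_, rfl⟩
    have hform : x ⬝ᵥ (Bhatᵀ * A * Bhat).mulVec x = v ⬝ᵥ A.mulVec v := by
      rw [hvdef, ← Matrix.mulVec_mulVec, ← Matrix.mulVec_mulVec, dot_transpose]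
    have hv1 : ∑ i, v i ^ 2 = 1 := by
      rw [← dot_self_eq, hvdef, ← dot_transpose, Matrix.mulVec_mulVec, hBhat,
        Matrix.one_mulVec, dot_self_eq, hx]
    obtain ⟨p, hpdef⟩ : ∃ p', p' = Bᵀ.mulVec v := ⟨_, rfl⟩
    obtain ⟨q, hqdef⟩ : ∃ q', q' = Bperpᵀ.mulVec v := ⟨_, rfl⟩
    obtain ⟨u, hudef⟩ : ∃ u', u' = B.mulVec p := ⟨_, rfl⟩
    obtain ⟨w, hwdef⟩ : ∃ w', w' = Bperp.mulVec q := ⟨_, rfl⟩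
    have huw : u + w = v := by
      rw [hudef, hwdef, hpdef, hqdef, Matrix.mulVec_mulVec, Matrix.mulVec_mulVec,
        ← Matrix.add_mulVec, hcomp, Matrix.one_mulVec]
    have hpu : ∑ i, p i ^ 2 = v ⬝ᵥ u := by
      rw [← dot_self_eq, hudef]
      nth_rewrite 1 [hpdef]
      rw [transpose_dot B p v]
    have hqw : ∑ i, q i ^ 2 = v ⬝ᵥ w := by
      rw [← dot_self_eq, hwdef]
      nth_rewrite 1 [hqdef]
      rw [transpose_dot Bperp q v]
    have hpq : ∑ i, p i ^ 2 + ∑ i, q i ^ 2 = 1 := by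
      rw [hpu, hqw, ← dotProduct_add, huw, dot_self_eq, hv1]
    have hq0 : 0 ≤ ∑ i, q i ^ 2 := Finset.sum_nonneg fun i _ => sq_nonneg _
    have hp0 : 0 ≤ ∑ i, p i ^ 2 := Finset.sum_nonneg fun i _ => sq_nonneg _
    -- bound on q
    have hqbound : ∑ i, q i ^ 2 ≤ ε ^ 2 := by
      have hq' : q = (Bhatᵀ * Bperp)ᵀ.mulVec x := by
        rw [hqdef, hvdef, Matrix.mulVec_mulVec, Matrix.transpose_mul,
          Matrix.transpose_transpose]
      have := specNorm_transpose_mulVec (Bhatᵀ * Bperp) x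
      rw [hx, mul_one] at this
      rw [hq']
      refine this.trans ?_
      have hs := specNorm_nonneg (Bhatᵀ * Bperp)
      nlinarith [hclose]
    have hpge : 1 - ε ^ 2 ≤ ∑ i, p i ^ 2 := by linarith
    have hple : ∑ i, p i ^ 2 ≤ 1 := by linarith
    -- norms of u, w
    have hunorm : ∑ i, u i ^ 2 = ∑ i, p i ^ 2 := by
      rw [← dot_self_eq, hudef, ← dot_transpose, Matrix.mulVec_mulVec, hB,
        Matrix.one_mulVec, dot_self_eq]
    have hwnorm : ∑ i, w i ^ 2 = ∑ i, q i ^ 2 := by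
      rw [← dot_self_eq, hwdef, ← dot_transpose, Matrix.mulVec_mulVec, hBperp,
        Matrix.one_mulVec, dot_self_eq]
    obtain ⟨cu, hcudef⟩ : ∃ z, z = C.mulVec u := ⟨_, rfl⟩
    obtain ⟨cw, hcwdef⟩ : ∃ z, z = C.mulVec w := ⟨_, rfl⟩
    obtain ⟨a, hadef⟩ : ∃ r, r = ∑ i, cu i ^ 2 := ⟨_, rfl⟩
    obtain ⟨b, hbdef⟩ : ∃ r, r = ∑ i, cw i ^ 2 := ⟨_, rfl⟩
    have ha0 : 0 ≤ a := hadef ▸ Finset.sum_nonneg fun i _ => sq_nonneg _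
    have hb0 : 0 ≤ b := hbdef ▸ Finset.sum_nonneg fun i _ => sq_nonneg _
    have haquad : a = u ⬝ᵥ A.mulVec u := by
      rw [hadef, hcudef]; exact (hquadA u).symm
    have hbquad : b = w ⬝ᵥ A.mulVec w := by
      rw [hbdef, hcwdef]; exact (hquadA w).symm
    -- lower bound on a
    have haB : u ⬝ᵥ A.mulVec u = p ⬝ᵥ (Bᵀ * A * B).mulVec p := by
      rw [← Matrix.mulVec_mulVec, ← Matrix.mulVec_mulVec, dot_transpose, hudef]
    have halb : om * ∑ i, p i ^ 2 ≤ a := by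
      rw [haquad, haB]
      calc om * ∑ i, p i ^ 2 ≤ minEig (Bᵀ * A * B) * ∑ i, p i ^ 2 :=
            mul_le_mul_of_nonneg_right hmin hp0
        _ ≤ p ⬝ᵥ (Bᵀ * A * B).mulVec p := minEig_mul_le _ _
    -- upper bounds on a and b
    have haub : a ≤ L ^ 2 := by
      rw [haquad]
      calc u ⬝ᵥ A.mulVec u ≤ specNorm A * ∑ i, u i ^ 2 := quad_le A u
        _ ≤ L ^ 2 * ∑ i, u i ^ 2 := by
            apply mul_le_mul_of_nonneg_right hAnorm
            exact Finset.sum_nonneg fun i _ => sq_nonneg _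
        _ ≤ L ^ 2 := by rw [hunorm]; nlinarith
    have hbub : b ≤ L ^ 2 * ε ^ 2 := by
      rw [hbquad]
      calc w ⬝ᵥ A.mulVec w ≤ specNorm A * ∑ i, w i ^ 2 := quad_le A w
        _ ≤ L ^ 2 * ∑ i, w i ^ 2 := by
            apply mul_le_mul_of_nonneg_right hAnorm
            exact Finset.sum_nonneg fun i _ => sq_nonneg _
        _ ≤ L ^ 2 * ε ^ 2 := by
            rw [hwnorm]
            exact mul_le_mul_of_nonneg_left hqbound hL2.le
    -- cross term bound
    have hcross : -(L ^ 2 * ε) ≤ cu ⬝ᵥ cw := by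
      have h1 : (-cu) ⬝ᵥ cw ≤
          Real.sqrt (∑ i, (-cu) i ^ 2) * Real.sqrt (∑ i, cw i ^ 2) := dot_le _ _
      have h2 : ∑ i, (-cu) i ^ 2 = a := by rw [hadef]; simp
      rw [h2, ← hbdef] at h1
      have h3 : Real.sqrt a * Real.sqrt b ≤ L ^ 2 * ε := by
        rw [← Real.sqrt_mul ha0]
        have hab : a * b ≤ (L ^ 2 * ε) ^ 2 := by nlinarith
        calc Real.sqrt (a * b) ≤ Real.sqrt ((L ^ 2 * ε) ^ 2) := Real.sqrt_le_sqrt hab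
          _ = L ^ 2 * ε := Real.sqrt_sq (by positivity)
      have h4 : (-cu) ⬝ᵥ cw = -(cu ⬝ᵥ cw) := by
        simp [dotProduct, Finset.sum_neg_distrib]
      rw [h4] at h1
      linarith [h1.trans h3]
    -- combine
    have hsplit : v ⬝ᵥ A.mulVec v = a + 2 * (cu ⬝ᵥ cw) + b := by
      rw [hquadA v, ← huw, Matrix.mulVec_add, ← hcudef, ← hcwdef]
      have : ∀ i : Fin d, (cu i + cw i) ^ 2 =
          cu i ^ 2 + 2 * (cu i * cw i) + cw i ^ 2 := fun i => by ring
      calc ∑ i, ((cu + cw) i) ^ 2 = ∑ i, (cu i ^ 2 + 2 * (cu i * cw i) + cw i ^ 2) := by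
            apply Finset.sum_congr rfl
            intro i _
            simp [this i]
        _ = a + 2 * (cu ⬝ᵥ cw) + b := by
            rw [Finset.sum_add_distrib, Finset.sum_add_distrib, ← Finset.mul_sum]
            simp [hadef, hbdef, dotProduct]
    rw [hform, hsplit]
    have hstep : om * (1 - ε ^ 2) - 2 * (L ^ 2 * ε) ≤ a + 2 * (cu ⬝ᵥ cw) + b := by
      have h1 : om * (1 - ε ^ 2) ≤ a := by
        calc om * (1 - ε ^ 2) ≤ om * ∑ i, p i ^ 2 :=
              mul_le_mul_of_nonneg_left hpge hom.le
          _ ≤ a := halb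
      linarith [hcross, hb0]
    calc (1 - om ^ 2 / (36 * L ^ 4)) * om - om / 2
        ≤ om * (1 - ε ^ 2) - 2 * (L ^ 2 * ε) := by
          rw [hε2]
          have : 2 * (L ^ 2 * ε) = om / 3 := by linarith [h2Lε]
          rw [this]
          nlinarith
      _ ≤ a + 2 * (cu ⬝ᵥ cw) + b := hstep
  -- conclude
  have hminM : (1 - om ^ 2 / (36 * L ^ 4)) * om - om / 2 ≤
      minEig (Bhatᵀ * A * Bhat) := minEig_ge hk _ _ key
  refine ⟨hminM, htargetpos, ?_⟩
  -- positive definiteness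
  have hposdef : (Bhatᵀ * A * Bhat).PosDef := by
    rw [Matrix.posDef_iff_dotProduct_mulVec]
    constructor
    · show (Bhatᵀ * A * Bhat)ᴴ = _
      rw [Matrix.conjTranspose_eq_transpose_of_trivial]
      rw [Matrix.transpose_mul, Matrix.transpose_mul, Matrix.transpose_transpose]
      have hAt : Aᵀ = A := by
        have := hA.1
        rwa [Matrix.IsHermitian, Matrix.conjTranspose_eq_transpose_of_trivial] at this
      rw [hAt]
      exact (Matrix.mul_assoc Bhatᵀ A Bhat).symm
    · intro x hx
      have hstar : star x = x := by funext i; simp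
      rw [hstar]
      have hs : 0 < ∑ i, x i ^ 2 := by
        rcases Function.ne_iff.mp hx with ⟨i, hi⟩
        have hi' : x i ≠ 0 := by simpa using hi
        have : (0:ℝ) < x i ^ 2 := by positivity
        exact Finset.sum_pos' (fun j _ => sq_nonneg _) ⟨i, Finset.mem_univ i, this⟩
      have h1 : minEig (Bhatᵀ * A * Bhat) * ∑ i, x i ^ 2 ≤
          x ⬝ᵥ (Bhatᵀ * A * Bhat).mulVec x := minEig_mul_le _ _
      have h2 : 0 < minEig (Bhatᵀ * A * Bhat) := lt_of_lt_of_le htargetpos hminM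
      calc (0:ℝ) < minEig (Bhatᵀ * A * Bhat) * ∑ i, x i ^ 2 := mul_pos h2 hs
        _ ≤ _ := h1
  exact hposdef.isUnit
end
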